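/- Combining the two bounds J(t,x,h) ≤ 4h + Γ(1/2)x(x+h)/h and J(t,x,h) ≤ 2h/x + h²√t/(x(x+h)) yields: there exists C_T > 0 such that for all 0 < x, 0 < h with x, x+h ≤ 1 and t ∈ (0,T], J(t,x,h) ≤ C_T h^{1/3} (using the first bound when x ≤ h^{2/3} and the second when x > h^{2/3}). -/

import Mathlib

open MeasureTheory Real

noncomputable def J (t x h : ℝ) : ℝ :=
  ∫ s in Set.Ioc (0:ℝ) t, Real.sqrt s *
    ((1 - Real.exp (-x ^ 2 / s)) / x ^ 2 +
     (1 - Real.exp (-(x + h) ^ 2 / s)) / (x + h) ^ 2 -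
     2 * Real.exp (-h ^ 2 / (4 * s)) * (1 - Real.exp (-(x * (x + h)) / s)) / (x * (x + h)))

section helpers

lemma mono_aux {f f' : ℝ → ℝ} (hf : ∀ t, HasDerivAt f (f' t) t)
    {a b : ℝ} (hab : a ≤ b) (hd : ∀ t ∈ Set.Icc a b, 0 ≤ f' t) : f a ≤ f b := by
  have h := monotoneOn_of_deriv_nonneg (convex_Icc a b)
    (fun t _ => (hf t).continuousAt.continuousWithinAt)
    (fun t ht => ((hf t).differentiableAt).differentiableWithinAt)
    (fun t ht => by
      rw [(hf t).deriv]
      exact hd t (interior_subset ht))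
  exact h (Set.left_mem_Icc.mpr hab) (Set.right_mem_Icc.mpr hab) hab

lemma hasDerivAt_exp_neg (t : ℝ) : HasDerivAt (fun r : ℝ => exp (-r)) (-exp (-t)) t := by
  have := (hasDerivAt_neg t).exp
  rw [mul_neg_one] at this
  exact this

lemma one_sub_exp_le (u : ℝ) : 1 - exp (-u) ≤ u := by
  nlinarith [Real.add_one_le_exp (-u)]

lemma one_sub_exp_nonneg {u : ℝ} (hu : 0 ≤ u) : 0 ≤ 1 - exp (-u) := by
  nlinarith [Real.exp_le_one_iff.mpr (by linarith : -u ≤ 0)]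

lemma one_sub_exp_le_one {u : ℝ} : 1 - exp (-u) ≤ 1 := by
  nlinarith [Real.exp_pos (-u)]

lemma key1 {u v : ℝ} (hu : 0 < u) (huv : u ≤ v) :
    u * (1 - exp (-v)) ≤ v * (1 - exp (-u)) := by
  have h0 : (fun t => t * (1 - exp (-u)) - u * (1 - exp (-t))) u ≤
      (fun t => t * (1 - exp (-u)) - u * (1 - exp (-t))) v := by
    apply mono_aux (f := fun t => t * (1 - exp (-u)) - u * (1 - exp (-t)))
      (f' := fun t => (1 - exp (-u)) - u * exp (-t)) _ huv
    · intro t ht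
      have h1 : exp (-t) ≤ exp (-u) := exp_le_exp.mpr (by linarith [ht.1])
      have h2 : u + 1 ≤ exp u := Real.add_one_le_exp u
      have h3 : exp (-u) * exp u = 1 := by rw [← exp_add]; simp
      have h4 : 0 < exp (-u) := exp_pos _
      show 0 ≤ (1 - exp (-u)) - u * exp (-t)
      nlinarith
    · intro t
      have h1 : HasDerivAt (fun t : ℝ => t * (1 - exp (-u))) (1 - exp (-u)) t := by
        simpa using (hasDerivAt_id t).mul_const (1 - exp (-u))
      have h2 : HasDerivAt (fun t : ℝ => u * (1 - exp (-t))) (u * exp (-t)) t := by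
        simpa using ((hasDerivAt_const t (1:ℝ)).sub (hasDerivAt_exp_neg t)).const_mul u
      exact h1.sub h2
  simp only at h0
  nlinarith

lemma psi_nonneg {t : ℝ} (ht : 0 ≤ t) : 0 ≤ (1 + t) * exp (-t) - 1 + t ^ 2 / 2 := by
  have h0 : (fun t => (1 + t) * exp (-t) - 1 + t ^ 2 / 2) 0 ≤
      (fun t => (1 + t) * exp (-t) - 1 + t ^ 2 / 2) t := by
    apply mono_aux (f := fun t => (1 + t) * exp (-t) - 1 + t ^ 2 / 2)
      (f' := fun t => t * (1 - exp (-t))) _ ht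
    · intro r hr
      have := one_sub_exp_nonneg hr.1
      nlinarith [hr.1]
    · intro r
      have he := hasDerivAt_exp_neg r
      have h1 : HasDerivAt (fun r : ℝ => (1 + r) * exp (-r))
          (1 * exp (-r) + (1 + r) * (-exp (-r))) r := by
        exact (((hasDerivAt_const r (1:ℝ)).add (hasDerivAt_id r)).mul he).congr_deriv (by simp)
      have h2 : HasDerivAt (fun r : ℝ => r ^ 2 / 2) r r := by
        simpa using ((hasDerivAt_pow 2 r).div_const 2)
      have := (h1.sub (hasDerivAt_const r (1:ℝ))).add h2
      refine this.congr_deriv ?_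
      ring
  norm_num at h0
  nlinarith [h0]

lemma key2 {u v : ℝ} (hu : 0 < u) (huv : u ≤ v) :
    (1 - exp (-u)) / u - (1 - exp (-v)) / v ≤ (v - u) / 2 := by
  have hv : 0 < v := lt_of_lt_of_le hu huv
  have hF' : ∀ t : ℝ, HasDerivAt
      (fun t => u * t * (t - u) / 2 - t * (1 - exp (-u)) + u * (1 - exp (-t)))
      (u * (2 * t - u) / 2 - (1 - exp (-u)) + u * exp (-t)) t := by
    intro t
    have h1 : HasDerivAt (fun t : ℝ => u * t * (t - u) / 2) (u * (2 * t - u) / 2) t := by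
      have : HasDerivAt (fun t : ℝ => u * t * (t - u)) (u * (2 * t - u)) t := by
        have := ((hasDerivAt_id t).const_mul u).mul ((hasDerivAt_id t).sub_const u)
        refine this.congr_deriv ?_; simp; ring
      simpa using this.div_const 2
    have h2 : HasDerivAt (fun t : ℝ => t * (1 - exp (-u))) (1 - exp (-u)) t := by
      simpa using (hasDerivAt_id t).mul_const (1 - exp (-u))
    have h3 : HasDerivAt (fun t : ℝ => u * (1 - exp (-t))) (u * exp (-t)) t := by
      simpa using ((hasDerivAt_const t (1:ℝ)).sub (hasDerivAt_exp_neg t)).const_mul u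
    exact (h1.sub h2).add h3
  have hF'nonneg : ∀ t ∈ Set.Icc u v, 0 ≤ u * (2 * t - u) / 2 - (1 - exp (-u)) + u * exp (-t) := by
    intro t ht
    have hmono : u * (2 * u - u) / 2 - (1 - exp (-u)) + u * exp (-u) ≤
        u * (2 * t - u) / 2 - (1 - exp (-u)) + u * exp (-t) := by
      apply mono_aux (f := fun t => u * (2 * t - u) / 2 - (1 - exp (-u)) + u * exp (-t))
        (f' := fun t => u - u * exp (-t)) _ ht.1
      · intro r hr
        have hr0 : (0:ℝ) ≤ r := le_trans hu.le hr.1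
        have : exp (-r) ≤ 1 := exp_le_one_iff.mpr (by linarith)
        nlinarith
      · intro r
        have h1 : HasDerivAt (fun r : ℝ => u * (2 * r - u) / 2) u r := by
          have := (((hasDerivAt_id r).const_mul (2:ℝ)).sub_const u).const_mul u
          simpa using this.div_const 2
        have h2 : HasDerivAt (fun r : ℝ => u * exp (-r)) (u * (-exp (-r))) r :=
          (hasDerivAt_exp_neg r).const_mul u
        have := (h1.sub_const (1 - exp (-u))).add h2
        refine this.congr_deriv ?_; ring
    have hpsi := psi_nonneg hu.le
    nlinarith
  have hF := mono_aux hF' huv hF'nonneg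
  rw [div_sub_div _ _ hu.ne' hv.ne', div_le_div_iff₀ (by positivity) (by positivity)]
  nlinarith [hF]

lemma interp {a b : ℝ} (ha : 0 ≤ a) (hb : 0 ≤ b) {θ : ℝ} (h0 : 0 ≤ θ) (h1 : θ ≤ 1) :
    min a b ≤ a ^ θ * b ^ (1 - θ) := by
  rcases le_total a b with hab | hab
  · rw [min_eq_left hab]
    calc a = a ^ θ * a ^ (1 - θ) := by
            rw [← Real.rpow_add' ha (by norm_num)]; norm_num
      _ ≤ a ^ θ * b ^ (1 - θ) := by
            apply mul_le_mul_of_nonneg_left (Real.rpow_le_rpow ha hab (by linarith))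
              (Real.rpow_nonneg ha θ)
  · rw [min_eq_right hab]
    calc b = b ^ θ * b ^ (1 - θ) := by
            rw [← Real.rpow_add' hb (by norm_num)]; norm_num
      _ ≤ a ^ θ * b ^ (1 - θ) := by
            apply mul_le_mul_of_nonneg_right (Real.rpow_le_rpow hb hab h0)
              (Real.rpow_nonneg hb _)

lemma sq_rpow_half {y : ℝ} (hy : 0 ≤ y) : (y ^ 2) ^ ((1:ℝ)/2) = y := by
  rw [← Real.rpow_natCast y 2, ← Real.rpow_mul hy]
  norm_num

lemma term3 {s h : ℝ} (hs : 0 < s) (hh : 0 < h) (W : ℝ) (hW1 : W ≤ 1/s)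
    (hW2 : W ≤ h ^ 2 / s * (1 / s)) :
    Real.sqrt s * W ≤ h ^ ((2:ℝ)/3) * s ^ (-(5:ℝ)/6) := by
  have hmin : W ≤ (1/s) ^ ((2:ℝ)/3) * (h ^ 2 / s * (1 / s)) ^ (1 - (2:ℝ)/3) :=
    le_trans (le_min hW1 hW2) (interp (by positivity) (by positivity) (by norm_num) (by norm_num))
  have key : Real.sqrt s * ((1/s) ^ ((2:ℝ)/3) * (h ^ 2 / s * (1 / s)) ^ (1 - (2:ℝ)/3))
      = h ^ ((2:ℝ)/3) * s ^ (-(5:ℝ)/6) := by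
    rw [Real.sqrt_eq_rpow]
    have e1 : (1:ℝ)/s = s ^ (-1:ℝ) := by rw [Real.rpow_neg_one]; rw [one_div]
    have e2 : h ^ 2 / s * (1/s) = h ^ (2:ℝ) * s ^ (-2:ℝ) := by
      rw [← Real.rpow_natCast h 2]
      rw [show (-2:ℝ) = -1 + -1 by norm_num, Real.rpow_add hs, Real.rpow_neg_one]
      push_cast
      field_simp
    rw [e2, e1, ← Real.rpow_mul hs.le, Real.mul_rpow (by positivity) (by positivity),
      ← Real.rpow_mul hh.le, ← Real.rpow_mul hs.le]
    have re : ∀ p q : ℝ, s ^ p * s ^ q = s ^ (p + q) := fun p q => (Real.rpow_add hs p q).symm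
    calc s ^ ((1:ℝ)/2) * (s ^ (-1*((2:ℝ)/3)) * (h ^ (2*(1-(2:ℝ)/3)) * s ^ (-2*(1-(2:ℝ)/3))))
        = h ^ (2*(1-(2:ℝ)/3)) * (s ^ ((1:ℝ)/2) * s ^ (-1*((2:ℝ)/3)) * s ^ (-2*(1-(2:ℝ)/3))) := by
          ring
      _ = h ^ ((2:ℝ)/3) * s ^ (-(5:ℝ)/6) := by
          rw [re, re]; norm_num
  calc Real.sqrt s * W ≤ Real.sqrt s * ((1/s) ^ ((2:ℝ)/3) * (h ^ 2 / s * (1 / s)) ^ (1 - (2:ℝ)/3)) :=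
        mul_le_mul_of_nonneg_left hmin (Real.sqrt_nonneg s)
    _ = h ^ ((2:ℝ)/3) * s ^ (-(5:ℝ)/6) := key

lemma term1a {s x h : ℝ} (hs : 0 < s) (hx : 0 < x) (hh : 0 < h)
    (hxh : x ≤ h ^ ((2:ℝ)/3)) (D : ℝ) (hD1 : D ≤ 1/s) (hD2 : D ≤ x * h / (2 * s ^ 2)) :
    Real.sqrt s * D ≤ h ^ ((5:ℝ)/12) * s ^ (-(3:ℝ)/4) := by
  have hD2' : D ≤ h ^ ((2:ℝ)/3) * h / s ^ 2 := by
    have : x * h / (2 * s ^ 2) ≤ h ^ ((2:ℝ)/3) * h / s ^ 2 := by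
      apply div_le_div₀ (by positivity) (by nlinarith [Real.rpow_nonneg hh.le ((2:ℝ)/3)])
        (by positivity) (by nlinarith [sq_nonneg s])
    linarith
  have hmin : D ≤ (1/s) ^ ((3:ℝ)/4) * (h ^ ((2:ℝ)/3) * h / s ^ 2) ^ (1 - (3:ℝ)/4) :=
    le_trans (le_min hD1 hD2')
      (interp (by positivity) (by positivity) (by norm_num) (by norm_num))
  have key : Real.sqrt s * ((1/s) ^ ((3:ℝ)/4) * (h ^ ((2:ℝ)/3) * h / s ^ 2) ^ (1 - (3:ℝ)/4))
      = h ^ ((5:ℝ)/12) * s ^ (-(3:ℝ)/4) := by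
    rw [Real.sqrt_eq_rpow]
    have e2 : h ^ ((2:ℝ)/3) * h / s ^ 2 = h ^ ((5:ℝ)/3) * s ^ (-2:ℝ) := by
      rw [show ((5:ℝ)/3) = (2:ℝ)/3 + 1 by norm_num, Real.rpow_add hh, Real.rpow_one,
        show (-2:ℝ) = -1 + -1 by norm_num, Real.rpow_add hs, Real.rpow_neg_one]
      field_simp
    have e1 : (1:ℝ)/s = s ^ (-1:ℝ) := by rw [Real.rpow_neg_one, one_div]
    rw [e2, e1, ← Real.rpow_mul hs.le, Real.mul_rpow (by positivity) (by positivity),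
      ← Real.rpow_mul hh.le, ← Real.rpow_mul hs.le]
    have re : ∀ p q : ℝ, s ^ p * s ^ q = s ^ (p + q) := fun p q => (Real.rpow_add hs p q).symm
    calc s ^ ((1:ℝ)/2) * (s ^ (-1*((3:ℝ)/4)) * (h ^ ((5:ℝ)/3*(1-(3:ℝ)/4)) * s ^ (-2*(1-(3:ℝ)/4))))
        = h ^ ((5:ℝ)/3*(1-(3:ℝ)/4)) * (s ^ ((1:ℝ)/2) * s ^ (-1*((3:ℝ)/4)) * s ^ (-2*(1-(3:ℝ)/4))) := by
          ring
      _ = h ^ ((5:ℝ)/12) * s ^ (-(3:ℝ)/4) := by rw [re, re]; norm_num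
  calc Real.sqrt s * D
      ≤ Real.sqrt s * ((1/s) ^ ((3:ℝ)/4) * (h ^ ((2:ℝ)/3) * h / s ^ 2) ^ (1 - (3:ℝ)/4)) :=
        mul_le_mul_of_nonneg_left hmin (Real.sqrt_nonneg s)
    _ = h ^ ((5:ℝ)/12) * s ^ (-(3:ℝ)/4) := key

lemma term1b {s x h : ℝ} (hs : 0 < s) (hx : 0 < x) (hh : 0 < h)
    (hxh : h ^ ((2:ℝ)/3) ≤ x) (D : ℝ) (hD3 : D ≤ h / x ^ 3) (hD2 : D ≤ x * h / (2 * s ^ 2)) :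
    Real.sqrt s * D ≤ h ^ ((1:ℝ)/3) * s ^ (-(1:ℝ)/2) := by
  have hD2' : D ≤ x * h / s ^ 2 := by
    have : x * h / (2 * s ^ 2) ≤ x * h / s ^ 2 :=
      div_le_div₀ (by positivity) le_rfl (by positivity) (by nlinarith [sq_nonneg s])
    linarith
  have hmin : D ≤ (h / x ^ 3) ^ ((1:ℝ)/2) * (x * h / s ^ 2) ^ (1 - (1:ℝ)/2) :=
    le_trans (le_min hD3 hD2')
      (interp (by positivity) (by positivity) (by norm_num) (by norm_num))
  have key : (h / x ^ 3) ^ ((1:ℝ)/2) * (x * h / s ^ 2) ^ (1 - (1:ℝ)/2)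
      = h / (x * s) := by
    rw [show (1 - (1:ℝ)/2) = (1:ℝ)/2 by norm_num,
      ← Real.mul_rpow (by positivity) (by positivity),
      show h / x ^ 3 * (x * h / s ^ 2) = (h / (x * s)) ^ 2 by field_simp,
      sq_rpow_half (by positivity)]
  have hfinal : Real.sqrt s * (h / (x * s)) ≤ h ^ ((1:ℝ)/3) * s ^ (-(1:ℝ)/2) := by
    have hhx : h / x ≤ h ^ ((1:ℝ)/3) := by
      rw [div_le_iff₀ hx]
      calc h = h ^ ((1:ℝ)/3) * h ^ ((2:ℝ)/3) := by
            rw [← Real.rpow_add hh]; norm_num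
        _ ≤ h ^ ((1:ℝ)/3) * x :=
            mul_le_mul_of_nonneg_left hxh (Real.rpow_nonneg hh.le _)
    have e : Real.sqrt s * (h / (x * s)) = (h / x) * s ^ (-(1:ℝ)/2) := by
      rw [Real.sqrt_eq_rpow, show (-(1:ℝ)/2) = (1:ℝ)/2 + -1 by norm_num, Real.rpow_add hs,
        Real.rpow_neg_one]
      field_simp
    rw [e]
    exact mul_le_mul_of_nonneg_right hhx (Real.rpow_nonneg hs.le _)
  calc Real.sqrt s * D ≤ Real.sqrt s * ((h / x ^ 3) ^ ((1:ℝ)/2) * (x * h / s ^ 2) ^ (1 - (1:ℝ)/2)) :=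
        mul_le_mul_of_nonneg_left hmin (Real.sqrt_nonneg s)
    _ = Real.sqrt s * (h / (x * s)) := by rw [key]
    _ ≤ h ^ ((1:ℝ)/3) * s ^ (-(1:ℝ)/2) := hfinal

-- bounds on φ-type quantities (with exponent written as -u/s to match J)
lemma phi_nonneg' {u s : ℝ} (hu : 0 < u) (hs : 0 < s) : 0 ≤ (1 - exp (-u / s)) / u := by
  have h1 : 0 ≤ 1 - exp (-(u/s)) := one_sub_exp_nonneg (by positivity)
  rw [← neg_div] at h1
  exact div_nonneg h1 hu.le

lemma phi_le_inv {u s : ℝ} (hu : 0 < u) (hs : 0 < s) : (1 - exp (-u / s)) / u ≤ 1 / s := by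
  have h1 := one_sub_exp_le (u/s)
  rw [← neg_div] at h1
  rw [div_le_div_iff₀ hu hs]
  have h2 := mul_le_mul_of_nonneg_right h1 hs.le
  rw [div_mul_cancel₀ _ hs.ne'] at h2
  linarith

lemma phi_anti {u v s : ℝ} (hu : 0 < u) (huv : u ≤ v) (hs : 0 < s) :
    (1 - exp (-v / s)) / v ≤ (1 - exp (-u / s)) / u := by
  have hv : 0 < v := lt_of_lt_of_le hu huv
  rw [div_le_div_iff₀ hv hu]
  have k := key1 (u := u/s) (v := v/s) (by positivity) (by gcongr)
  rw [← neg_div, ← neg_div] at k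
  have k2 := mul_le_mul_of_nonneg_right k hs.le
  have e1 : u / s * (1 - exp (-u / s)) * s = u * (1 - exp (-u / s)) := by
    field_simp
  have e1' : u / s * (1 - exp (-v / s)) * s = u * (1 - exp (-v / s)) := by
    field_simp
  have e2 : v / s * (1 - exp (-u / s)) * s = v * (1 - exp (-u / s)) := by
    field_simp
  rw [e1', e2] at k2
  linarith

lemma phi_lip {u v s : ℝ} (hu : 0 < u) (huv : u ≤ v) (hs : 0 < s) :
    (1 - exp (-u / s)) / u - (1 - exp (-v / s)) / v ≤ (v - u) / (2 * s ^ 2) := by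
  have hv : 0 < v := lt_of_lt_of_le hu huv
  have k := key2 (u := u/s) (v := v/s) (by positivity) (by gcongr)
  rw [← neg_div, ← neg_div] at k
  have e1 : (1 - exp (-u/s))/(u/s) = s * ((1 - exp (-u/s))/u) := by
    field_simp
  have e2 : (1 - exp (-v/s))/(v/s) = s * ((1 - exp (-v/s))/v) := by
    field_simp
  have e3 : (v/s - u/s)/2 = s * ((v-u)/(2*s^2)) := by
    field_simp
  rw [e1, e2, e3] at k
  have := (mul_le_mul_iff_right₀ hs).mp (by linarith :
    s * ((1 - exp (-u/s))/u - (1 - exp (-v/s))/v) ≤ s * ((v-u)/(2*s^2)))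
  exact this

lemma phi_diff3 {x m s : ℝ} (hx : 0 < x) (hxm : x ≤ m) (hs : 0 < s) :
    (1 - exp (-x ^ 2 / s)) / x ^ 2 - (1 - exp (-(x * m) / s)) / (x * m)
      ≤ (m - x) / (x ^ 2 * m) := by
  have hm : 0 < m := lt_of_lt_of_le hx hxm
  have hba : exp (-(x * m) / s) ≤ exp (-x ^ 2 / s) := by
    apply exp_le_exp.mpr
    have hnum : -(x * m) ≤ -x ^ 2 := by nlinarith
    exact div_le_div_of_nonneg_right hnum hs.le
  have h1 : 0 ≤ 1 - exp (-x ^ 2 / s) := by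
    have := Real.exp_le_one_iff.mpr (show -x ^ 2 / s ≤ 0 by
      rw [neg_div]; simp; positivity)
    linarith
  have h2 : 1 - exp (-x ^ 2 / s) ≤ 1 := by nlinarith [exp_pos (-x ^ 2 / s)]
  have h3 : 0 < exp (-(x * m) / s) := exp_pos _
  have base : x * exp (-(x * m) / s) ≤ m * exp (-x ^ 2 / s) :=
    mul_le_mul hxm hba h3.le hm.le
  rw [div_sub_div _ _ (by positivity) (by positivity),
    div_le_div_iff₀ (by positivity) (by positivity)]
  linarith [mul_le_mul_of_nonneg_left base (show (0:ℝ) ≤ x ^ 3 * m by positivity)]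

end helpers

section pointwise

lemma sqrt_mul_two_div {s : ℝ} (hs : 0 < s) :
    Real.sqrt s * (2 / s) = 2 * s ^ (-(1:ℝ)/2) := by
  rw [Real.sqrt_eq_rpow, show (-(1:ℝ)/2) = (1:ℝ)/2 + -1 by norm_num, Real.rpow_add hs,
    Real.rpow_neg_one]
  field_simp

set_option maxHeartbeats 2000000 in
lemma pointwise {x h s : ℝ} (hx : 0 < x) (hh : 0 < h) (hh1 : h ≤ 1) (hs : 0 < s) :
    Real.sqrt s * ((1 - exp (-x ^ 2 / s)) / x ^ 2 + (1 - exp (-(x + h) ^ 2 / s)) / (x + h) ^ 2 -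
      2 * exp (-h ^ 2 / (4 * s)) * (1 - exp (-(x * (x + h)) / s)) / (x * (x + h)))
    ≤ h ^ ((1:ℝ)/3) * (s ^ (-(3:ℝ)/4) + s ^ (-(1:ℝ)/2) + 2 * s ^ (-(5:ℝ)/6)) := by
  have hm : 0 < x + h := by linarith
  have hxm : x < x + h := by linarith
  have hs34 : (0:ℝ) ≤ s ^ (-(3:ℝ)/4) := Real.rpow_nonneg hs.le _
  have hs12 : (0:ℝ) ≤ s ^ (-(1:ℝ)/2) := Real.rpow_nonneg hs.le _
  have hs56 : (0:ℝ) ≤ s ^ (-(5:ℝ)/6) := Real.rpow_nonneg hs.le _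
  have hh13 : (0:ℝ) ≤ h ^ ((1:ℝ)/3) := Real.rpow_nonneg hh.le _
  -- basic bounds
  have hC0 : 0 ≤ (1 - exp (-(x * (x + h)) / s)) / (x * (x + h)) :=
    phi_nonneg' (by positivity) hs
  have hC1 : (1 - exp (-(x * (x + h)) / s)) / (x * (x + h)) ≤ 1 / s :=
    phi_le_inv (by positivity) hs
  have hA1 : (1 - exp (-x ^ 2 / s)) / x ^ 2 ≤ 1 / s := phi_le_inv (by positivity) hs
  have hBC : (1 - exp (-(x + h) ^ 2 / s)) / (x + h) ^ 2
      ≤ (1 - exp (-(x * (x + h)) / s)) / (x * (x + h)) := by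
    have := phi_anti (u := x * (x + h)) (v := (x + h) ^ 2) (by positivity) (by nlinarith) hs
    exact this
  -- bounds on D := A - C
  have hAC1 : (1 - exp (-x ^ 2 / s)) / x ^ 2 - (1 - exp (-(x * (x + h)) / s)) / (x * (x + h))
      ≤ 1 / s := by linarith
  have hAC2 : (1 - exp (-x ^ 2 / s)) / x ^ 2 - (1 - exp (-(x * (x + h)) / s)) / (x * (x + h))
      ≤ x * h / (2 * s ^ 2) := by
    have := phi_lip (u := x ^ 2) (v := x * (x + h)) (by positivity) (by nlinarith) hs
    rw [show x * (x + h) - x ^ 2 = x * h by ring] at this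
    exact this
  have hAC3 : (1 - exp (-x ^ 2 / s)) / x ^ 2 - (1 - exp (-(x * (x + h)) / s)) / (x * (x + h))
      ≤ h / x ^ 3 := by
    have h3 := phi_diff3 hx hxm.le hs
    rw [show x + h - x = h by ring] at h3
    have hle : x ^ 3 ≤ x ^ 2 * (x + h) := by nlinarith
    have : h / (x ^ 2 * (x + h)) ≤ h / x ^ 3 :=
      div_le_div_of_nonneg_left hh.le (by positivity) hle
    linarith
  -- E facts
  have hE0 : 0 < exp (-h ^ 2 / (4 * s)) := exp_pos _
  have h1E2 : 1 - exp (-h ^ 2 / (4 * s)) ≤ h ^ 2 / (4 * s) := by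
    have := one_sub_exp_le (h ^ 2 / (4 * s))
    rwa [← neg_div] at this
  have h1E0 : 0 ≤ 1 - exp (-h ^ 2 / (4 * s)) := by
    have := one_sub_exp_nonneg (show (0:ℝ) ≤ h ^ 2 / (4 * s) by positivity)
    rwa [← neg_div] at this
  have h1E1 : 1 - exp (-h ^ 2 / (4 * s)) ≤ 1 := by nlinarith [exp_pos (-h ^ 2 / (4 * s))]
  have hW1 : (1 - exp (-h ^ 2 / (4 * s))) * ((1 - exp (-(x * (x + h)) / s)) / (x * (x + h)))
      ≤ 1 / s := by
    calc (1 - exp (-h ^ 2 / (4 * s))) * ((1 - exp (-(x * (x + h)) / s)) / (x * (x + h)))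
        ≤ 1 * (1 / s) := mul_le_mul h1E1 hC1 hC0 zero_le_one
      _ = 1 / s := one_mul _
  have hW2 : (1 - exp (-h ^ 2 / (4 * s))) * ((1 - exp (-(x * (x + h)) / s)) / (x * (x + h)))
      ≤ h ^ 2 / s * (1 / s) := by
    have hq : h ^ 2 / (4 * s) ≤ h ^ 2 / s :=
      div_le_div_of_nonneg_left (by positivity) hs (by linarith)
    exact mul_le_mul (by linarith) hC1 hC0 (by positivity)
  -- term 3
  have hT3 := term3 hs hh _ hW1 hW2
  -- term 1 (case split)
  have hT1 : Real.sqrt s *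
      ((1 - exp (-x ^ 2 / s)) / x ^ 2 - (1 - exp (-(x * (x + h)) / s)) / (x * (x + h)))
      ≤ h ^ ((1:ℝ)/3) * (s ^ (-(3:ℝ)/4) + s ^ (-(1:ℝ)/2)) := by
    rcases le_total x (h ^ ((2:ℝ)/3)) with hcase | hcase
    · have hb := term1a hs hx hh hcase _ hAC1 hAC2
      have h512 : h ^ ((5:ℝ)/12) ≤ h ^ ((1:ℝ)/3) :=
        Real.rpow_le_rpow_of_exponent_ge hh hh1 (by norm_num)
      calc Real.sqrt s *
          ((1 - exp (-x ^ 2 / s)) / x ^ 2 - (1 - exp (-(x * (x + h)) / s)) / (x * (x + h)))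
          ≤ h ^ ((5:ℝ)/12) * s ^ (-(3:ℝ)/4) := hb
        _ ≤ h ^ ((1:ℝ)/3) * s ^ (-(3:ℝ)/4) := mul_le_mul_of_nonneg_right h512 hs34
        _ ≤ h ^ ((1:ℝ)/3) * (s ^ (-(3:ℝ)/4) + s ^ (-(1:ℝ)/2)) := by
            apply mul_le_mul_of_nonneg_left (by linarith) hh13
    · have hb := term1b hs hx hh hcase _ hAC3 hAC2
      calc Real.sqrt s *
          ((1 - exp (-x ^ 2 / s)) / x ^ 2 - (1 - exp (-(x * (x + h)) / s)) / (x * (x + h)))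
          ≤ h ^ ((1:ℝ)/3) * s ^ (-(1:ℝ)/2) := hb
        _ ≤ h ^ ((1:ℝ)/3) * (s ^ (-(3:ℝ)/4) + s ^ (-(1:ℝ)/2)) := by
            apply mul_le_mul_of_nonneg_left (by linarith) hh13
  -- combine
  have hBCterm : Real.sqrt s * ((1 - exp (-(x + h) ^ 2 / s)) / (x + h) ^ 2
      - (1 - exp (-(x * (x + h)) / s)) / (x * (x + h))) ≤ 0 :=
    mul_nonpos_of_nonneg_of_nonpos (Real.sqrt_nonneg s) (by linarith)
  have h23 : h ^ ((2:ℝ)/3) ≤ h ^ ((1:ℝ)/3) :=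
    Real.rpow_le_rpow_of_exponent_ge hh hh1 (by norm_num)
  calc Real.sqrt s * ((1 - exp (-x ^ 2 / s)) / x ^ 2 + (1 - exp (-(x + h) ^ 2 / s)) / (x + h) ^ 2 -
        2 * exp (-h ^ 2 / (4 * s)) * (1 - exp (-(x * (x + h)) / s)) / (x * (x + h)))
      = Real.sqrt s *
          ((1 - exp (-x ^ 2 / s)) / x ^ 2 - (1 - exp (-(x * (x + h)) / s)) / (x * (x + h)))
        + Real.sqrt s * ((1 - exp (-(x + h) ^ 2 / s)) / (x + h) ^ 2
          - (1 - exp (-(x * (x + h)) / s)) / (x * (x + h)))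
        + 2 * (Real.sqrt s * ((1 - exp (-h ^ 2 / (4 * s))) *
            ((1 - exp (-(x * (x + h)) / s)) / (x * (x + h))))) := by ring
    _ ≤ h ^ ((1:ℝ)/3) * (s ^ (-(3:ℝ)/4) + s ^ (-(1:ℝ)/2)) + 0
        + 2 * (h ^ ((2:ℝ)/3) * s ^ (-(5:ℝ)/6)) := by
        have := mul_le_mul_of_nonneg_left hT3 (by norm_num : (0:ℝ) ≤ 2)
        linarith
    _ ≤ h ^ ((1:ℝ)/3) * (s ^ (-(3:ℝ)/4) + s ^ (-(1:ℝ)/2) + 2 * s ^ (-(5:ℝ)/6)) := by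
        have := mul_le_mul_of_nonneg_right h23 hs56
        nlinarith

end pointwise

theorem J_holder_bound (T : ℝ) (hT : 0 < T) :
    ∃ C > 0, ∀ x h : ℝ, 0 < x → 0 < h → x ≤ 1 → x + h ≤ 1 →
      ∀ t ∈ Set.Ioc (0:ℝ) T, J t x h ≤ C * h ^ ((1:ℝ)/3) := by
  refine ⟨4 * T ^ ((1:ℝ)/4) + 2 * T ^ ((1:ℝ)/2) + 12 * T ^ ((1:ℝ)/6), by positivity, ?_⟩
  intro x h hx hh hx1 hxh1 t ht
  obtain ⟨ht0, htT⟩ := ht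
  have hh1 : h ≤ 1 := by linarith
  have hh13 : (0:ℝ) ≤ h ^ ((1:ℝ)/3) := Real.rpow_nonneg hh.le _
  set f : ℝ → ℝ := fun s => Real.sqrt s *
    ((1 - Real.exp (-x ^ 2 / s)) / x ^ 2 +
     (1 - Real.exp (-(x + h) ^ 2 / s)) / (x + h) ^ 2 -
     2 * Real.exp (-h ^ 2 / (4 * s)) * (1 - Real.exp (-(x * (x + h)) / s)) / (x * (x + h)))
    with hfdef
  set g : ℝ → ℝ := fun s =>
    h ^ ((1:ℝ)/3) * (s ^ (-(3:ℝ)/4) + s ^ (-(1:ℝ)/2) + 2 * s ^ (-(5:ℝ)/6)) with hgdef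
  -- interval integrability of rpow pieces
  have i1 : IntervalIntegrable (fun s : ℝ => s ^ (-(3:ℝ)/4)) volume 0 t :=
    intervalIntegral.intervalIntegrable_rpow' (by norm_num)
  have i2 : IntervalIntegrable (fun s : ℝ => s ^ (-(1:ℝ)/2)) volume 0 t :=
    intervalIntegral.intervalIntegrable_rpow' (by norm_num)
  have i3 : IntervalIntegrable (fun s : ℝ => s ^ (-(5:ℝ)/6)) volume 0 t :=
    intervalIntegral.intervalIntegrable_rpow' (by norm_num)
  have hg_int : IntegrableOn g (Set.Ioc 0 t) := by
    rw [hgdef]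
    have := (((i1.add i2).add (i3.const_mul 2)).const_mul (h ^ ((1:ℝ)/3)))
    rw [intervalIntegrable_iff_integrableOn_Ioc_of_le ht0.le] at this
    exact this
  have hf_meas : AEStronglyMeasurable f (volume.restrict (Set.Ioc 0 t)) := by
    apply Measurable.aestronglyMeasurable
    rw [hfdef]
    fun_prop
  have hf_int : IntegrableOn f (Set.Ioc 0 t) := by
    have i0 : IntegrableOn (fun s : ℝ => 2 * s ^ (-(1:ℝ)/2)) (Set.Ioc 0 t) := by
      have := i2.const_mul 2
      rwa [intervalIntegrable_iff_integrableOn_Ioc_of_le ht0.le] at this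
    apply MeasureTheory.Integrable.mono i0 hf_meas
    rw [ae_restrict_iff' measurableSet_Ioc]
    apply ae_of_all
    intro s hs
    have hs0 : 0 < s := hs.1
    have hA0 : 0 ≤ (1 - exp (-x ^ 2 / s)) / x ^ 2 := phi_nonneg' (by positivity) hs0
    have hA1 : (1 - exp (-x ^ 2 / s)) / x ^ 2 ≤ 1 / s := phi_le_inv (by positivity) hs0
    have hB0 : 0 ≤ (1 - exp (-(x + h) ^ 2 / s)) / (x + h) ^ 2 := by
      have := phi_nonneg' (u := (x + h) ^ 2) (by positivity) hs0
      exact this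
    have hB1 : (1 - exp (-(x + h) ^ 2 / s)) / (x + h) ^ 2 ≤ 1 / s :=
      phi_le_inv (by positivity) hs0
    have hC0 : 0 ≤ (1 - exp (-(x * (x + h)) / s)) / (x * (x + h)) :=
      phi_nonneg' (by positivity) hs0
    have hC1 : (1 - exp (-(x * (x + h)) / s)) / (x * (x + h)) ≤ 1 / s :=
      phi_le_inv (by positivity) hs0
    have hE0 : 0 < exp (-h ^ 2 / (4 * s)) := exp_pos _
    have hE1 : exp (-h ^ 2 / (4 * s)) ≤ 1 := by
      apply exp_le_one_iff.mpr
      rw [neg_div]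
      have : (0:ℝ) ≤ h ^ 2 / (4 * s) := by positivity
      linarith
    have hEC0 : 0 ≤ exp (-h ^ 2 / (4 * s)) * ((1 - exp (-(x * (x + h)) / s)) / (x * (x + h))) :=
      mul_nonneg hE0.le hC0
    have hEC1 : exp (-h ^ 2 / (4 * s)) * ((1 - exp (-(x * (x + h)) / s)) / (x * (x + h)))
        ≤ 1 / s := by
      calc exp (-h ^ 2 / (4 * s)) * ((1 - exp (-(x * (x + h)) / s)) / (x * (x + h)))
          ≤ 1 * (1 / s) := mul_le_mul hE1 hC1 hC0 zero_le_one
        _ = 1 / s := one_mul _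
    have habs : |(1 - exp (-x ^ 2 / s)) / x ^ 2 + (1 - exp (-(x + h) ^ 2 / s)) / (x + h) ^ 2 -
        2 * exp (-h ^ 2 / (4 * s)) * (1 - exp (-(x * (x + h)) / s)) / (x * (x + h))| ≤ 2 / s := by
      have h2s : (2:ℝ) / s = 2 * (1 / s) := by ring
      rw [abs_le]
      constructor
      · have : 2 * exp (-h ^ 2 / (4 * s)) * (1 - exp (-(x * (x + h)) / s)) / (x * (x + h))
            = 2 * (exp (-h ^ 2 / (4 * s)) * ((1 - exp (-(x * (x + h)) / s)) / (x * (x + h)))) := by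
          ring
        rw [this]
        nlinarith
      · have : 2 * exp (-h ^ 2 / (4 * s)) * (1 - exp (-(x * (x + h)) / s)) / (x * (x + h))
            = 2 * (exp (-h ^ 2 / (4 * s)) * ((1 - exp (-(x * (x + h)) / s)) / (x * (x + h)))) := by
          ring
        rw [this]
        nlinarith
    show ‖f s‖ ≤ ‖2 * s ^ (-(1:ℝ)/2)‖
    rw [hfdef]
    simp only [Real.norm_eq_abs]
    rw [abs_mul, abs_of_nonneg (Real.sqrt_nonneg s),
      abs_of_nonneg (by positivity : (0:ℝ) ≤ 2 * s ^ (-(1:ℝ)/2))]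
    calc Real.sqrt s * |(1 - exp (-x ^ 2 / s)) / x ^ 2 +
          (1 - exp (-(x + h) ^ 2 / s)) / (x + h) ^ 2 -
          2 * exp (-h ^ 2 / (4 * s)) * (1 - exp (-(x * (x + h)) / s)) / (x * (x + h))|
        ≤ Real.sqrt s * (2 / s) := mul_le_mul_of_nonneg_left habs (Real.sqrt_nonneg s)
      _ = 2 * s ^ (-(1:ℝ)/2) := sqrt_mul_two_div hs0
  -- pointwise comparison
  have hle : f ≤ᵐ[volume.restrict (Set.Ioc 0 t)] g :=
    (ae_restrict_iff' measurableSet_Ioc).mpr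
      (ae_of_all _ fun s hs => pointwise hx hh hh1 hs.1)
  have hmono := integral_mono_ae hf_int hg_int hle
  -- value of ∫ g
  have hgval : ∫ s in Set.Ioc (0:ℝ) t, g s
      = h ^ ((1:ℝ)/3) * (4 * t ^ ((1:ℝ)/4) + 2 * t ^ ((1:ℝ)/2) + 12 * t ^ ((1:ℝ)/6)) := by
    rw [hgdef, ← intervalIntegral.integral_of_le ht0.le]
    rw [intervalIntegral.integral_const_mul]
    rw [intervalIntegral.integral_add (i1.add i2) (i3.const_mul 2),
      intervalIntegral.integral_add i1 i2, intervalIntegral.integral_const_mul]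
    rw [integral_rpow (Or.inl (by norm_num)), integral_rpow (Or.inl (by norm_num)),
      integral_rpow (Or.inl (by norm_num))]
    rw [Real.zero_rpow (by norm_num), Real.zero_rpow (by norm_num),
      Real.zero_rpow (by norm_num)]
    rw [show (-(3:ℝ)/4 + 1) = (1:ℝ)/4 by norm_num, show (-(1:ℝ)/2 + 1) = (1:ℝ)/2 by norm_num,
      show (-(5:ℝ)/6 + 1) = (1:ℝ)/6 by norm_num]
    ring
  -- final bound
  have htT4 : t ^ ((1:ℝ)/4) ≤ T ^ ((1:ℝ)/4) := Real.rpow_le_rpow ht0.le htT (by norm_num)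
  have htT2 : t ^ ((1:ℝ)/2) ≤ T ^ ((1:ℝ)/2) := Real.rpow_le_rpow ht0.le htT (by norm_num)
  have htT6 : t ^ ((1:ℝ)/6) ≤ T ^ ((1:ℝ)/6) := Real.rpow_le_rpow ht0.le htT (by norm_num)
  have hJ : J t x h = ∫ s in Set.Ioc (0:ℝ) t, f s := rfl
  rw [hJ]
  calc (∫ s in Set.Ioc (0:ℝ) t, f s) ≤ ∫ s in Set.Ioc (0:ℝ) t, g s := hmono
    _ = h ^ ((1:ℝ)/3) * (4 * t ^ ((1:ℝ)/4) + 2 * t ^ ((1:ℝ)/2) + 12 * t ^ ((1:ℝ)/6)) := hgval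
    _ ≤ h ^ ((1:ℝ)/3) * (4 * T ^ ((1:ℝ)/4) + 2 * T ^ ((1:ℝ)/2) + 12 * T ^ ((1:ℝ)/6)) := by
        apply mul_le_mul_of_nonneg_left (by linarith) hh13
    _ = (4 * T ^ ((1:ℝ)/4) + 2 * T ^ ((1:ℝ)/2) + 12 * T ^ ((1:ℝ)/6)) * h ^ ((1:ℝ)/3) := by
        ring
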